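/- For every x ∈ (0, 1), the Ramanujan constant function has the convergent series expansion R(x) = 1/x + Σ_{k=1}^∞ 2·ζ(2k+1)·x^{2k}, where ζ denotes the Riemann zeta function. -/

import Mathlib

open Real Set Filter Topology

/-- The digamma function `ψ(x) = Γ'(x)/Γ(x)`. -/
noncomputable def digamma (x : ℝ) : ℝ := deriv Real.Gamma x / Real.Gamma x

/-- The Ramanujan constant function `R(x) = -2γ - ψ(x) - ψ(1-x)`. -/
noncomputable def ramanujanR (x : ℝ) : ℝ :=
  -2 * Real.eulerMascheroniConstant - digamma x - digamma (1 - x)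

/-- The Riemann zeta function as a real series `ζ(s) = Σ_{n=1}^∞ n^{-s}`. -/
noncomputable def zetaR (s : ℝ) : ℝ := ∑' n : ℕ, 1 / ((n : ℝ) + 1) ^ s

/-- The generalized elliptic integral of the first kind
`K_a(r) = (π/2) Σ_{n=0}^∞ ((a)_n (1-a)_n / (n!)^2) r^(2n)`. -/
noncomputable def Ka (a r : ℝ) : ℝ :=
  Real.pi / 2 * ∑' n : ℕ,
    (Polynomial.eval a (ascPochhammer ℝ n) * Polynomial.eval (1 - a) (ascPochhammer ℝ n)
      / (Nat.factorial n : ℝ) ^ 2) * r ^ (2 * n)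

/-- The generalized elliptic integral of the second kind
`E_a(r) = (π/2) Σ_{n=0}^∞ ((a-1)_n (1-a)_n / (n!)^2) r^(2n)`. -/
noncomputable def Ea (a r : ℝ) : ℝ :=
  Real.pi / 2 * ∑' n : ℕ,
    (Polynomial.eval (a - 1) (ascPochhammer ℝ n) * Polynomial.eval (1 - a) (ascPochhammer ℝ n)
      / (Nat.factorial n : ℝ) ^ 2) * r ^ (2 * n)

local notation "γ" => Real.eulerMascheroniConstant

lemma summable_aux (C : ℝ) : Summable (fun m : ℕ => C / ((m : ℝ) + 1) ^ 2) := by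
  have h : Summable (fun m : ℕ => 1 / ((m : ℝ) + 1) ^ 2) := by
    have := (summable_nat_add_iff (f := fun n : ℕ => 1 / (n : ℝ) ^ 2) 1).mpr
      (summable_one_div_nat_pow.mpr one_lt_two)
    refine this.congr fun n => by push_cast; ring
  refine (h.mul_left C).congr fun n => ?_
  rw [mul_one_div]

lemma hasDerivAt_logGamma (x : ℝ) (hx : 0 < x) :
    HasDerivAt (Real.log ∘ Real.Gamma)
      (-γ - 1 / x + ∑' m : ℕ, (1 / ((m : ℝ) + 1) - 1 / (x + m + 1))) x := by
  set u : ℕ → ℝ → ℝ := fun m y => 1 / ((m : ℝ) + 1) - 1 / (y + m + 1) with hu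
  set s : Set ℝ := Ioo 0 (x + 1) with hs
  have hxs : x ∈ s := ⟨hx, by linarith⟩
  have hopen : IsOpen s := isOpen_Ioo
  -- derivative of partial sums
  set f' : ℕ → ℝ → ℝ := fun n y =>
    Real.log n - ∑ m ∈ Finset.range (n + 1), 1 / (y + m) with hf'
  have hderiv : ∀ n : ℕ, ∀ y ∈ s, HasDerivAt (fun y => Real.BohrMollerup.logGammaSeq y n)
      (f' n y) y := by
    intro n y hy
    have h1 : HasDerivAt (fun y : ℝ => y * Real.log n + Real.log (Nat.factorial n : ℝ))
        (Real.log n) y := by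
      simpa using (hasDerivAt_mul_const (Real.log n)).add_const (Real.log (Nat.factorial n : ℝ))
    have h2 : HasDerivAt (fun y : ℝ => ∑ m ∈ Finset.range (n + 1), Real.log (y + m))
        (∑ m ∈ Finset.range (n + 1), 1 / (y + m)) y := by
      refine HasDerivAt.fun_sum fun m _ => ?_
      have hpos : (0 : ℝ) < y + m := by
        have : (0 : ℝ) ≤ (m : ℝ) := Nat.cast_nonneg m
        linarith [hy.1]
      simpa using ((hasDerivAt_id y).add_const (m : ℝ)).log hpos.ne'
    exact h1.sub h2
  -- uniform convergence of derivatives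
  have hunif : TendstoUniformlyOn f'
      (fun y => -γ - 1 / y + ∑' m : ℕ, u m y) atTop s := by
    have hsum : Summable (fun m : ℕ => (x + 1) / ((m : ℝ) + 1) ^ 2) := summable_aux (x + 1)
    have hM : TendstoUniformlyOn
        (fun n y => ∑ m ∈ Finset.range n, u m y) (fun y => ∑' m, u m y) atTop s := by
      refine tendstoUniformlyOn_tsum_nat hsum fun m y hy => ?_
      have hy1 : 0 < y := hy.1
      have hy2 : y < x + 1 := hy.2
      have hm : (0:ℝ) < (m:ℝ) + 1 := by positivity
      have hym : (0:ℝ) < y + m + 1 := by linarith [Nat.cast_nonneg (α := ℝ) m]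
      have hval : u m y = y / (((m:ℝ) + 1) * (y + m + 1)) := by
        rw [hu]
        field_simp
        ring
      rw [hval, Real.norm_eq_abs, abs_of_nonneg (by positivity)]
      have h2 : ((m:ℝ) + 1) ^ 2 ≤ ((m:ℝ) + 1) * (y + m + 1) := by nlinarith
      exact div_le_div₀ (by positivity) hy2.le (by positivity) h2
    have hC : TendstoUniformlyOn
        (fun n : ℕ => fun _ : ℝ => Real.log n - (harmonic n : ℝ)) (fun _ => -γ) atTop s := by
      have hten : Tendsto (fun n : ℕ => Real.log n - (harmonic n : ℝ)) atTop (𝓝 (-γ)) := by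
        simpa using (Real.tendsto_harmonic_sub_log).neg
      rw [Metric.tendstoUniformlyOn_iff]
      intro ε hε
      filter_upwards [Metric.tendsto_nhds.mp hten ε hε] with n hn y _
      simpa [dist_comm] using hn
    have hI : TendstoUniformlyOn
        (fun _ : ℕ => fun y : ℝ => -(1 / y)) (fun y : ℝ => -(1 / y)) atTop s := by
      rw [Metric.tendstoUniformlyOn_iff]
      intro ε hε
      filter_upwards with n y _
      simpa using hε
    have := (hC.add hI).add hM
    refine (this.congr ?_).congr_right ?_
    · filter_upwards with n y hy
      have hy1 : 0 < y := hy.1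
      simp only [Pi.add_apply, hf', hu]
      rw [Finset.sum_range_succ' (fun m => 1 / (y + (m:ℝ))) n, Finset.sum_sub_distrib]
      have hharm : (harmonic n : ℝ) = ∑ m ∈ Finset.range n, 1 / ((m:ℝ) + 1) := by
        rw [harmonic]
        push_cast
        simp [one_div]
      rw [hharm]
      have : ∀ m ∈ Finset.range n, 1 / (y + ((m:ℕ) + 1 : ℕ)) = 1 / (y + (m:ℝ) + 1) := by
        intro m _
        push_cast
        ring_nf
      rw [Finset.sum_congr rfl this]
      ring
    · intro y hy
      simp only [Pi.add_apply]
      ring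
  exact hasDerivAt_of_tendstoUniformlyOn hopen hunif
    (Eventually.of_forall hderiv)
    (fun y hy => Real.BohrMollerup.tendsto_log_gamma hy.1) hxs

lemma digamma_hasSum {x : ℝ} (hx : 0 < x) :
    HasSum (fun m : ℕ => 1 / ((m : ℝ) + 1) - 1 / (x + m + 1))
      (digamma x + γ + 1 / x) := by
  have hval : ∀ m : ℕ, 1 / ((m : ℝ) + 1) - 1 / (x + m + 1)
      = x / (((m : ℝ) + 1) * (x + m + 1)) := by
    intro m
    have hm : (0:ℝ) < (m:ℝ) + 1 := by positivity
    have hxm : (0:ℝ) < x + m + 1 := by linarith [Nat.cast_nonneg (α := ℝ) m]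
    field_simp
    ring
  have hsummable : Summable (fun m : ℕ => 1 / ((m : ℝ) + 1) - 1 / (x + m + 1)) := by
    refine Summable.of_nonneg_of_le (fun m => ?_) (fun m => ?_) (summable_aux x)
    · rw [hval m]
      have : (0:ℝ) < x + m + 1 := by linarith [Nat.cast_nonneg (α := ℝ) m]
      positivity
    · rw [hval m]
      have hm : (0:ℝ) < (m:ℝ) + 1 := by positivity
      have h2 : ((m:ℝ) + 1) ^ 2 ≤ ((m:ℝ) + 1) * (x + m + 1) := by nlinarith
      exact div_le_div₀ hx.le le_rfl (by positivity) h2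
  have h := hsummable.hasSum
  have hne : ∀ m : ℕ, x ≠ -(m : ℝ) :=
    fun m => (((neg_nonpos.mpr (Nat.cast_nonneg m)).trans_lt hx).ne')
  have hlog : HasDerivAt (Real.log ∘ Real.Gamma) (deriv Real.Gamma x / Real.Gamma x) x :=
    (Real.differentiableAt_Gamma hne).hasDerivAt.log (Real.Gamma_pos_of_pos hx).ne'
  have huniq := (hasDerivAt_logGamma x hx).unique hlog
  have hts : (∑' m : ℕ, (1 / ((m : ℝ) + 1) - 1 / (x + m + 1))) = digamma x + γ + 1 / x := by
    rw [digamma, ← huniq]; ring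
  rwa [hts] at h

lemma hasSum_telescope : HasSum (fun m : ℕ => 1 / ((m : ℝ) + 1) - 1 / ((m : ℝ) + 2)) 1 := by
  have hnn : ∀ m : ℕ, 0 ≤ 1 / ((m : ℝ) + 1) - 1 / ((m : ℝ) + 2) := by
    intro m
    have hm : (0:ℝ) < (m:ℝ) + 1 := by positivity
    have h := one_div_le_one_div_of_le hm (by linarith : (m:ℝ) + 1 ≤ (m:ℝ) + 2)
    linarith
  rw [hasSum_iff_tendsto_nat_of_nonneg hnn]
  have hps : ∀ n : ℕ, ∑ i ∈ Finset.range n, (1 / ((i : ℝ) + 1) - 1 / ((i : ℝ) + 2))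
      = 1 - 1 / ((n : ℝ) + 1) := by
    intro n
    have h := Finset.sum_range_sub' (f := fun i : ℕ => 1 / ((i : ℝ) + 1)) n
    simp only [Nat.cast_zero, Nat.cast_add, Nat.cast_one] at h
    rw [show (1:ℝ) - 1 / ((n:ℝ) + 1) = 1 / ((0:ℝ) + 1) - 1 / ((n:ℝ)+1) by norm_num, ← h]
    refine Finset.sum_congr rfl fun i _ => by ring_nf
  simp only [hps]
  simpa using tendsto_const_nhds.sub (tendsto_one_div_add_atTop_nhds_zero_nat (𝕜 := ℝ))

lemma hasSum_main {x : ℝ} (hx0 : 0 < x) (hx1 : x < 1) :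
    HasSum (fun m : ℕ => 1 / ((m : ℝ) + 1 + x) + 1 / ((m : ℝ) + 1 - x) - 2 / ((m : ℝ) + 1))
      (ramanujanR x - 1 / x) := by
  have h1 := digamma_hasSum hx0
  have h2 := digamma_hasSum (show (0:ℝ) < 1 - x by linarith)
  have h3 := hasSum_telescope
  set b : ℕ → ℝ := fun m => 1 / ((m : ℝ) + 1 - x) - 1 / ((m : ℝ) + 1) with hb
  have hb1 : HasSum (fun m : ℕ => b (m + 1))
      (1 - (digamma (1 - x) + γ + 1 / (1 - x))) := by
    have h := h3.sub h2
    have heq : (fun m : ℕ => (1 / ((m : ℝ) + 1) - 1 / ((m : ℝ) + 2))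
        - (1 / ((m : ℝ) + 1) - 1 / ((1 - x) + m + 1))) = fun m : ℕ => b (m + 1) := by
      funext m
      rw [hb]
      push_cast
      ring_nf
    rwa [heq] at h
  have hb0 := (hasSum_nat_add_iff (f := b) 1).mp hb1
  simp only [Finset.sum_range_one] at hb0
  have key := (h1.neg).add hb0
  have heq2 : (fun m : ℕ => -(1 / ((m : ℝ) + 1) - 1 / (x + m + 1)) + b m)
      = fun m : ℕ => 1 / ((m : ℝ) + 1 + x) + 1 / ((m : ℝ) + 1 - x) - 2 / ((m : ℝ) + 1) := by
    funext m
    rw [hb]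
    ring_nf
  rw [heq2] at key
  have hsum_eq : ramanujanR x - 1 / x
      = -(digamma x + γ + 1 / x) + (1 - (digamma (1 - x) + γ + 1 / (1 - x))
        + (1 / ((0:ℕ) + 1 - x) - 1 / ((0:ℕ) + 1))) := by
    rw [ramanujanR]
    push_cast
    have h1x : (1:ℝ) - x ≠ 0 := by linarith
    field_simp
    have : (1 - x)⁻¹ * (1 - x) = 1 := inv_mul_cancel₀ h1x
    linear_combination (-x) * this
  rwa [← hsum_eq] at key

lemma hasSum_geom_row {x : ℝ} (hx0 : 0 < x) (hx1 : x < 1) (m : ℕ) :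
    HasSum (fun k : ℕ => 2 * x ^ (2 * k + 2) / ((m : ℝ) + 1) ^ (2 * k + 3))
      (1 / ((m : ℝ) + 1 + x) + 1 / ((m : ℝ) + 1 - x) - 2 / ((m : ℝ) + 1)) := by
  obtain ⟨n, hn⟩ : ∃ n : ℝ, n = (m : ℝ) + 1 := ⟨_, rfl⟩
  rw [← hn]
  have hn1 : (1:ℝ) ≤ n := by rw [hn]; nlinarith [Nat.cast_nonneg (α := ℝ) m]
  have hn0 : (0:ℝ) < n := by linarith
  have hxn : x / n < 1 := by
    rw [div_lt_one hn0]; linarith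
  have hxn0 : 0 ≤ x / n := by positivity
  have hr1 : (x / n) ^ 2 < 1 := by nlinarith
  have hg := (hasSum_geometric_of_lt_one (sq_nonneg (x / n)) hr1).mul_left (2 * x ^ 2 / n ^ 3)
  have heq : (fun k : ℕ => 2 * x ^ 2 / n ^ 3 * ((x / n) ^ 2) ^ k)
      = fun k : ℕ => 2 * x ^ (2 * k + 2) / n ^ (2 * k + 3) := by
    funext k
    rw [← pow_mul, div_pow]
    have hnz : n ≠ 0 := by positivity
    field_simp
    ring
  have hrne : 1 - (x / n) ^ 2 ≠ 0 := by nlinarith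
  have hxne : n + x ≠ 0 := by positivity
  have hxne2 : n - x ≠ 0 := by nlinarith
  have hsum : 2 * x ^ 2 / n ^ 3 * (1 - (x / n) ^ 2)⁻¹
      = 1 / (n + x) + 1 / (n - x) - 2 / n := by
    have hnz : n ≠ 0 := by positivity
    have h0 : 1 - (x / n) ^ 2 = (n ^ 2 - x ^ 2) / n ^ 2 := by field_simp
    have hne2 : n ^ 2 - x ^ 2 ≠ 0 := by nlinarith
    rw [h0, inv_div]
    field_simp
    ring
  rw [heq, hsum] at hg
  exact hg

theorem stmt5 (x : ℝ) (hx : x ∈ Set.Ioo (0 : ℝ) 1) :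
    HasSum (fun k : ℕ => 2 * zetaR (2 * (k : ℝ) + 3) * x ^ (2 * k + 2))
      (ramanujanR x - 1 / x) := by
  obtain ⟨hx0, hx1⟩ := hx
  set g : ℕ × ℕ → ℝ := fun p => 2 * x ^ (2 * p.2 + 2) / ((p.1 : ℝ) + 1) ^ (2 * p.2 + 3)
    with hgdef
  have hrow : ∀ m : ℕ, HasSum (fun k => g (m, k))
      (1 / ((m : ℝ) + 1 + x) + 1 / ((m : ℝ) + 1 - x) - 2 / ((m : ℝ) + 1)) :=
    fun m => hasSum_geom_row hx0 hx1 m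
  have hnn : 0 ≤ g := by
    intro p
    have : (0:ℝ) < (p.1 : ℝ) + 1 := by positivity
    simp only [hgdef, Pi.zero_apply]
    positivity
  have hmain := hasSum_main hx0 hx1
  have hsg : Summable g := by
    refine (summable_prod_of_nonneg hnn).mpr ⟨fun m => (hrow m).summable, ?_⟩
    exact hmain.summable.congr fun m => ((hrow m).tsum_eq).symm
  have hg : HasSum g (ramanujanR x - 1 / x) := by
    have h := hsg.hasSum
    have h2 := h.prod_fiberwise hrow
    rwa [← hmain.unique h2] at h
  have hgeq : ∀ n k : ℕ, g (n, k) = 2 * x ^ (2 * k + 2) / ((n : ℝ) + 1) ^ (2 * k + 3) :=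
    fun n k => rfl
  clear_value g
  have hswap : HasSum (fun p : ℕ × ℕ => g (p.2, p.1)) (ramanujanR x - 1 / x) :=
    ((Equiv.prodComm ℕ ℕ).hasSum_iff).mpr hg
  refine hswap.prod_fiberwise fun k => ?_
  have hzsummable : Summable (fun n : ℕ => 1 / ((n : ℝ) + 1) ^ (2 * k + 3)) := by
    have := (summable_nat_add_iff (f := fun n : ℕ => 1 / (n : ℝ) ^ (2 * k + 3)) 1).mpr
      (summable_one_div_nat_pow.mpr (by omega))
    exact this.congr fun n => by push_cast; ring
  have hzz : HasSum (fun n : ℕ => 1 / ((n : ℝ) + 1) ^ (2 * k + 3))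
      (zetaR (2 * (k : ℝ) + 3)) := by
    have h := hzsummable.hasSum
    have heq : (fun n : ℕ => 1 / ((n : ℝ) + 1) ^ ((2 * (k : ℝ) + 3) : ℝ))
        = fun n : ℕ => 1 / ((n : ℝ) + 1) ^ (2 * k + 3) := by
      funext n
      rw [show (2 * (k : ℝ) + 3) = ((2 * k + 3 : ℕ) : ℝ) by push_cast; ring,
        Real.rpow_natCast]
    rw [zetaR, heq]
    exact h
  have hfinal := hzz.mul_left (2 * x ^ (2 * k + 2))
  have heq2 : (fun n : ℕ => 2 * x ^ (2 * k + 2) * (1 / ((n : ℝ) + 1) ^ (2 * k + 3)))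
      = fun n : ℕ => g (n, k) := by
    funext n
    rw [hgeq, mul_one_div]
  rw [heq2] at hfinal
  rwa [show 2 * zetaR (2 * (k : ℝ) + 3) * x ^ (2 * k + 2)
    = 2 * x ^ (2 * k + 2) * zetaR (2 * (k : ℝ) + 3) by ring]
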